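/- Let μ, ν ∈ ℝ with μ + ν > −1 and μ − ν a nonnegative integer. Then for every integer k ≥ 0: if μ − ν is even, ∫₀^∞ x^k w_{μ,ν}(x) dx = Γ(k + (μ−ν+1)/2) Γ(k + (μ+ν+1)/2) 2^{2k+μ−1}; if μ − ν is odd, ∫₀^∞ x^k w_{μ,ν}(x) dx = Γ(k + (μ−ν+2)/2) Γ(k + (μ+ν+2)/2) 2^{2k+μ}. -/

import Mathlib

open MeasureTheory Filter Set Polynomial
open scoped Classical

noncomputable section

/-- The Abel limit of `∫₀^∞ g(x) dx` is `L`: for every `s > 0` the integral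
`∫₀^∞ e^{-s x} g(x) dx` converges and these integrals tend to `L` as `s → 0⁺`. -/
def HasAbelLimit (g : ℝ → ℂ) (L : ℂ) : Prop :=
  (∀ s : ℝ, 0 < s →
    IntegrableOn (fun x : ℝ => Complex.exp (-(s : ℂ) * (x : ℂ)) * g x) (Set.Ioi 0)) ∧
  Tendsto (fun s : ℝ => ∫ x in Set.Ioi (0:ℝ), Complex.exp (-(s : ℂ) * (x : ℂ)) * g x)
    (nhdsWithin 0 (Set.Ioi 0)) (nhds L)

/-- Bessel function of the first kind of order `ν`, for `x > 0`, with the convention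
`1/Γ(z) = 0` at nonpositive integers `z` (automatic since `Real.Gamma` vanishes there). -/
def besselJ (ν x : ℝ) : ℝ :=
  ∑' k : ℕ, ((-1 : ℝ) ^ k / ((k.factorial : ℝ) * Real.Gamma (ν + k + 1))) *
    (x / 2) ^ (ν + 2 * (k : ℝ))

/-- Modified Bessel function of the second kind of order `ν`, for `x > 0`. -/
def besselK (ν x : ℝ) : ℝ :=
  ∫ t in Set.Ioi (0:ℝ), Real.exp (-x * Real.cosh t) * Real.cosh (ν * t)

/-- The weight function `w_{μ,ν}` on `(0,∞)`. -/
def weightW (μ ν : ℝ) (x : ℝ) : ℝ :=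
  if ∃ m : ℤ, μ - ν = 2 * m then (1/2) * x ^ ((μ - 1)/2) * besselK ν (Real.sqrt x)
  else (1/2) * x ^ (μ/2) * besselK ν (Real.sqrt x)

/-- `0 < x_1 < ⋯ < x_n` together with positive weights `w_1, …, w_n` form an `n`-point
Gaussian quadrature rule for `w_{μ,ν}`. -/
def IsGaussRule (μ ν : ℝ) (n : ℕ) (xs ws : Fin n → ℝ) : Prop :=
  StrictMono xs ∧ (∀ j, 0 < xs j) ∧ (∀ j, 0 < ws j) ∧
  ∀ p : Polynomial ℝ, p.natDegree ≤ 2 * n - 1 →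
    ∑ j, ws j * p.eval (xs j) = ∫ x in Set.Ioi (0:ℝ), weightW μ ν x * p.eval x

/-- `κ = μ` if `μ - ν` is even and `κ = μ + 1` if `μ - ν` is odd. -/
def kappaQ (μ ν : ℕ) : ℝ := if Even (μ - ν) then (μ : ℝ) else (μ : ℝ) + 1

/-- The boundary weights `ŵ_k⁰` of the generalized Gauss–Radau rule. -/
def wHat0 (μ ν : ℕ) {n : ℕ} (xs ws : Fin n → ℝ) (k : ℕ) : ℝ :=
  (1 / (k.factorial : ℝ)) *
    (2 ^ k * Real.Gamma (((ν : ℝ) + k + 1)/2) / Real.Gamma (((ν : ℝ) - k + 1)/2)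
      - (2 / Real.pi) * Real.cos (((k : ℝ) - ν) * Real.pi / 2) *
          ∑ j, ws j * (xs j) ^ (((k : ℝ) - kappaQ μ ν)/2))

/-- The generalized Gauss–Radau rule `(Q_{2n,μ} f)(ω)`. -/
def QRule (μ ν : ℕ) {n : ℕ} (xs ws : Fin n → ℝ) (f : ℂ → ℂ) (ω : ℝ) : ℂ :=
  (1 / (ω : ℂ)) *
    ((∑ k ∈ Finset.range μ, (wHat0 μ ν xs ws k : ℂ) / (ω : ℂ) ^ k * iteratedDeriv k f 0)
      + ∑ j, ((ws j * (xs j) ^ (-(kappaQ μ ν)/2) / Real.pi : ℝ) : ℂ) *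
          (Complex.exp (-(ν : ℂ) * (Real.pi : ℂ) * Complex.I / 2) *
              f (Complex.I * (Real.sqrt (xs j) : ℂ) / (ω : ℂ))
            + Complex.exp ((ν : ℂ) * (Real.pi : ℂ) * Complex.I / 2) *
              f (-Complex.I * (Real.sqrt (xs j) : ℂ) / (ω : ℂ))))

/-- `P` is a monic polynomial of degree `m` orthogonal with respect to `x^μ J_ν(x)`
on `(0,∞)`, all integrals taken in the Abel-limit sense. -/
def MonicOrthoBessel (μ ν : ℝ) (m : ℕ) (P : Polynomial ℂ) : Prop :=
  P.Monic ∧ P.natDegree = m ∧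
  ∀ k < m, HasAbelLimit
    (fun x : ℝ => P.eval (x : ℂ) * ((x ^ ((k : ℝ) + μ) : ℝ) : ℂ) * (besselJ ν x : ℂ)) 0

/-- `φ` is the monic real polynomial of degree `m` orthogonal to all lower powers
with respect to the weight `w_{μ,ν}` on `(0,∞)`. -/
def IsMonicOrthoW (μ ν : ℝ) (m : ℕ) (φ : Polynomial ℝ) : Prop :=
  φ.Monic ∧ φ.natDegree = m ∧
  ∀ k < m, ∫ x in Set.Ioi (0:ℝ), weightW μ ν x * φ.eval x * x ^ k = 0


section MomentsAux
open Real

lemma betaIntegrable {a b : ℝ} (ha : 0 < a) (hb : 0 < b) :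
    IntegrableOn (fun x : ℝ => x ^ (a-1) * (1-x) ^ (b-1)) (Ioo 0 1) := by
  have h := (Complex.betaIntegral_convergent (u := a) (v := b) (by simpa) (by simpa)).norm
  rw [intervalIntegrable_iff_integrableOn_Ioo_of_le zero_le_one] at h
  refine h.congr_fun (fun x hx => ?_) measurableSet_Ioo
  obtain ⟨hx0, hx1⟩ := hx
  show ‖_ * _‖ = _
  rw [norm_mul]
  rw [show (a:ℂ) - 1 = ((a-1 : ℝ):ℂ) by push_cast; ring,
    show (b:ℂ) - 1 = ((b-1 : ℝ):ℂ) by push_cast; ring,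
    show (1 : ℂ) - (x:ℂ) = ((1 - x : ℝ):ℂ) by push_cast; ring]
  rw [Complex.norm_cpow_eq_rpow_re_of_pos hx0, Complex.norm_cpow_eq_rpow_re_of_pos (by linarith)]
  simp

lemma betaReal {a b : ℝ} (ha : 0 < a) (hb : 0 < b) :
    ∫ x in Ioo (0:ℝ) 1, x ^ (a-1) * (1-x) ^ (b-1)
      = Real.Gamma a * Real.Gamma b / Real.Gamma (a+b) := by
  have h := Complex.Gamma_mul_Gamma_eq_betaIntegral (s := a) (t := b) (by simpa) (by simpa)
  have hco : Complex.betaIntegral a b = ((∫ x in Ioo (0:ℝ) 1, x ^ (a-1) * (1-x) ^ (b-1) : ℝ) : ℂ) := by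
    rw [Complex.betaIntegral, intervalIntegral.integral_of_le zero_le_one,
      integral_Ioc_eq_integral_Ioo]
    refine (setIntegral_congr_fun measurableSet_Ioo (fun x hx => ?_)).trans (integral_ofReal (𝕜 := ℂ))
    obtain ⟨hx0, hx1⟩ := hx
    show (x:ℂ) ^ ((a:ℂ) - 1) * (1 - (x:ℂ)) ^ ((b:ℂ) - 1)
      = Complex.ofReal (x ^ (a - 1) * (1 - x) ^ (b - 1))
    rw [Complex.ofReal_mul, Complex.ofReal_cpow hx0.le,
      Complex.ofReal_cpow (by linarith : (0:ℝ) ≤ 1 - x)]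
    push_cast
    ring
  rw [hco] at h
  rw [show ((a:ℂ)+(b:ℂ)) = ((a+b : ℝ):ℂ) by push_cast; ring] at h
  rw [Complex.Gamma_ofReal, Complex.Gamma_ofReal, Complex.Gamma_ofReal] at h
  rw [← Complex.ofReal_mul, ← Complex.ofReal_mul] at h
  have := Complex.ofReal_injective h
  have hne : Real.Gamma (a+b) ≠ 0 := (Real.Gamma_pos_of_pos (by linarith)).ne'
  field_simp [this]
  rw [this]; ring

lemma subst_pointwise {A B t : ℝ} :
    |(-2) * exp (-2*t)| * ((2:ℝ)^(A+B-2) * ((exp (-2*t))^(A-1) + (exp (-2*t))^(B-1))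
        * (1 + exp (-2*t))^(-(A+B)))
      = Real.cosh ((A-B)*t) * (Real.cosh t)^(-(A+B)) := by
  have hexp : ∀ a c : ℝ, (exp a)^c = exp (a*c) := fun a c => by
    rw [Real.rpow_def_of_pos (exp_pos a), Real.log_exp]
  have h1 : (1:ℝ) + exp (-2*t) = 2 * (exp (-t) * Real.cosh t) := by
    rw [Real.cosh_eq, mul_div_assoc', mul_add, ← Real.exp_add, ← Real.exp_add,
      show -t + -t = -(2*t) by ring]
    ring_nf
    rw [Real.exp_zero]
    ring
  have h2 : ((1:ℝ) + exp (-2*t))^(-(A+B))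
      = 2^(-(A+B)) * (exp ((A+B)*t) * (Real.cosh t)^(-(A+B))) := by
    rw [h1, Real.mul_rpow (by norm_num) (by positivity),
      Real.mul_rpow (exp_pos _).le ((le_of_lt (Real.cosh_pos _))), hexp]
    ring_nf
  have h3 : |(-2) * exp (-2*t)| = 2 * exp (-2*t) := by
    rw [abs_mul, abs_neg, Real.abs_exp]; norm_num
  have h4 : (2:ℝ)^(A+B-2) * (2:ℝ)^(-(A+B)) = 1/4 := by
    rw [← Real.rpow_add two_pos, show A+B-2+-(A+B) = ((-2 : ℤ):ℝ) by push_cast; ring,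
      Real.rpow_intCast]
    norm_num
  rw [h2, hexp, hexp, h3]
  have e1 : exp (-2*t) * exp (-2*t*(A-1)) * exp ((A+B)*t) = exp (-((A-B)*t)) := by
    rw [← Real.exp_add, ← Real.exp_add]; ring_nf
  have e2 : exp (-2*t) * exp (-2*t*(B-1)) * exp ((A+B)*t) = exp ((A-B)*t) := by
    rw [← Real.exp_add, ← Real.exp_add]; ring_nf
  calc 2 * exp (-2*t) * ((2:ℝ)^(A+B-2) * (exp (-2*t*(A-1)) + exp (-2*t*(B-1)))
        * ((2:ℝ)^(-(A+B)) * (exp ((A+B)*t) * (Real.cosh t)^(-(A+B)))))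
      = ((2:ℝ)^(A+B-2) * (2:ℝ)^(-(A+B))) * 2 *
          (exp (-2*t) * exp (-2*t*(A-1)) * exp ((A+B)*t)
            + exp (-2*t) * exp (-2*t*(B-1)) * exp ((A+B)*t)) * (Real.cosh t)^(-(A+B)) := by
        ring
    _ = _ := by
      rw [h4, e1, e2,
        show Real.cosh ((A-B)*t) = (exp ((A-B)*t) + exp (-((A-B)*t)))/2 from Real.cosh_eq _]
      ring

lemma pointwise2 {A B y : ℝ} (hy : 0 < y) (hy1 : y < 1) :
    |1/(1+y)^2| * ((y/(1+y))^(A-1) * (1 - y/(1+y))^(B-1)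
        + (y/(1+y))^(B-1) * (1 - y/(1+y))^(A-1))
      = ((y^(A-1) * (1+y)^(-(A+B))) + (y^(B-1) * (1+y)^(-(A+B)))) := by
  have h1y : (0:ℝ) < 1 + y := by linarith
  have h5 : 1 - y/(1+y) = 1/(1+y) := by field_simp; ring
  have hpow : ∀ c d : ℝ, (1+y)^c * (1+y)^d = (1+y)^(c+d) := fun c d =>
    (Real.rpow_add h1y c d).symm
  rw [abs_of_pos (by positivity), h5, Real.div_rpow hy.le h1y.le, Real.div_rpow hy.le h1y.le,
    Real.div_rpow zero_le_one h1y.le, Real.div_rpow zero_le_one h1y.le,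
    Real.one_rpow, ← Real.rpow_natCast (1+y) 2, Real.rpow_neg h1y.le]
  have hne : ∀ c : ℝ, (1+y)^c ≠ 0 := fun c => (Real.rpow_pos_of_pos h1y c).ne'
  field_simp
  have e : (1+y)^(A+B) = (1+y)^((2:ℕ):ℝ) * (1+y)^(A-1) * (1+y)^(B-1) := by
    rw [hpow, hpow]; congr 1; push_cast; ring
  rw [e, Real.one_rpow]; ring

lemma J_integral {A B : ℝ} (hA : 0 < A) (hB : 0 < B) :
    ∫ t in Ioi (0:ℝ), Real.cosh ((A-B)*t) * (Real.cosh t)^(-(A+B))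
      = 2^(A+B-2) * (Real.Gamma A * Real.Gamma B / Real.Gamma (A+B)) := by
  -- Substitution y = exp(-2t)
  have him : (fun t:ℝ => exp (-2*t)) '' Ioi 0 = Ioo 0 1 := by
    ext y
    simp only [mem_image, mem_Ioi, mem_Ioo]
    constructor
    · rintro ⟨t, ht, rfl⟩
      exact ⟨exp_pos _, by rw [Real.exp_lt_one_iff]; nlinarith⟩
    · rintro ⟨h0, h1⟩
      refine ⟨-(Real.log y)/2, by nlinarith [Real.log_neg h0 h1], ?_⟩
      rw [show -2 * (-(Real.log y)/2) = Real.log y by ring, Real.exp_log h0]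
  have hd : ∀ t ∈ Ioi (0:ℝ), HasDerivWithinAt (fun t:ℝ => exp (-2*t))
      ((-2) * exp (-2*t)) (Ioi 0) t := by
    intro t _
    have hlin : HasDerivAt (fun t:ℝ => -2*t) (-2) t := by
      simpa using (hasDerivAt_id t).const_mul (-2)
    have := (Real.hasDerivAt_exp (-2*t)).comp t hlin
    simpa [Function.comp_def, mul_comm] using this.hasDerivWithinAt
  have hinj : InjOn (fun t:ℝ => exp (-2*t)) (Ioi 0) := fun a _ b _ h => by
    have := Real.exp_injective h; linarith [this]
  have key := integral_image_eq_integral_abs_deriv_smul measurableSet_Ioi hd hinj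
    (fun y => (2:ℝ)^(A+B-2) * ((y^(A-1) + y^(B-1)) * (1+y)^(-(A+B))))
  rw [him] at key
  have key2 : ∫ t in Ioi (0:ℝ), Real.cosh ((A-B)*t) * (Real.cosh t)^(-(A+B))
      = ∫ y in Ioo (0:ℝ) 1, (2:ℝ)^(A+B-2) * ((y^(A-1) + y^(B-1)) * (1+y)^(-(A+B))) := by
    rw [key]
    refine setIntegral_congr_fun measurableSet_Ioi (fun t _ => ?_)
    rw [smul_eq_mul, ← subst_pointwise]
    ring
  rw [key2, integral_const_mul]
  -- Substitution u = y/(1+y)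
  have him2 : (fun y:ℝ => y/(1+y)) '' Ioo 0 1 = Ioo 0 (1/2) := by
    ext u
    simp only [mem_image, mem_Ioo]
    constructor
    · rintro ⟨y, ⟨h0, h1⟩, rfl⟩
      constructor
      · positivity
      · rw [div_lt_div_iff₀ (by linarith) (by norm_num)]; linarith
    · rintro ⟨h0, h1⟩
      have h1u : (0:ℝ) < 1 - u := by linarith
      refine ⟨u/(1-u), ⟨div_pos h0 h1u, ?_⟩, ?_⟩
      · rw [div_lt_one h1u]; linarith
      · show u/(1-u) / (1 + u/(1-u)) = u
        rw [show 1 + u/(1-u) = 1/(1-u) by field_simp; ring]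
        field_simp
  have hd2 : ∀ y ∈ Ioo (0:ℝ) 1, HasDerivWithinAt (fun y:ℝ => y/(1+y))
      (1/(1+y)^2) (Ioo 0 1) y := by
    intro y hy
    have h1y : (1:ℝ) + y ≠ 0 := by have := hy.1; positivity
    have := (hasDerivAt_id' y).div (((hasDerivAt_id' y).const_add 1)) h1y
    exact (this.congr_deriv (by ring)).hasDerivWithinAt
  have hinj2 : InjOn (fun y:ℝ => y/(1+y)) (Ioo 0 1) := by
    rintro a ⟨ha, _⟩ b ⟨hb, _⟩ h
    simp only at h
    rw [div_eq_div_iff (by linarith) (by linarith)] at h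
    nlinarith
  have key3 := integral_image_eq_integral_abs_deriv_smul measurableSet_Ioo hd2 hinj2
    (fun u => u^(A-1) * (1-u)^(B-1) + u^(B-1) * (1-u)^(A-1))
  rw [him2] at key3
  have key4 : ∫ y in Ioo (0:ℝ) 1, (y^(A-1) + y^(B-1)) * (1+y)^(-(A+B))
      = ∫ u in Ioo (0:ℝ) (1/2), (u^(A-1) * (1-u)^(B-1) + u^(B-1) * (1-u)^(A-1)) := by
    rw [key3]
    refine setIntegral_congr_fun measurableSet_Ioo (fun y hy => ?_)
    rw [smul_eq_mul, pointwise2 hy.1 hy.2]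
    ring
  rw [key4]
  -- split the sum
  have iab : IntegrableOn (fun u:ℝ => u^(A-1) * (1-u)^(B-1)) (Ioo 0 (1/2)) :=
    (betaIntegrable hA hB).mono_set (Ioo_subset_Ioo le_rfl (by norm_num))
  have iba : IntegrableOn (fun u:ℝ => u^(B-1) * (1-u)^(A-1)) (Ioo 0 (1/2)) :=
    (betaIntegrable hB hA).mono_set (Ioo_subset_Ioo le_rfl (by norm_num))
  rw [integral_add iab iba]
  -- reflection for the second piece
  have him3 : (fun u:ℝ => 1 - u) '' Ioo 0 (1/2) = Ioo (1/2) 1 := by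
    ext v
    simp only [mem_image, mem_Ioo]
    constructor
    · rintro ⟨u, ⟨h0, h1⟩, rfl⟩; constructor <;> linarith
    · rintro ⟨h0, h1⟩; exact ⟨1 - v, ⟨by linarith, by linarith⟩, by ring⟩
  have hd3 : ∀ u ∈ Ioo (0:ℝ) (1/2), HasDerivWithinAt (fun u:ℝ => 1 - u)
      (-1) (Ioo 0 (1/2)) u := fun u _ =>
    (((hasDerivAt_id u).const_sub 1)).hasDerivWithinAt
  have hinj3 : InjOn (fun u:ℝ => 1 - u) (Ioo 0 (1/2)) := fun a _ b _ h => by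
    simp only at h; linarith
  have key5 := integral_image_eq_integral_abs_deriv_smul measurableSet_Ioo hd3 hinj3
    (fun v => v^(A-1) * (1-v)^(B-1))
  rw [him3] at key5
  have key6 : ∫ u in Ioo (0:ℝ) (1/2), u^(B-1) * (1-u)^(A-1)
      = ∫ v in Ioo (1/2:ℝ) 1, v^(A-1) * (1-v)^(B-1) := by
    rw [key5]
    refine setIntegral_congr_fun measurableSet_Ioo (fun u _ => ?_)
    rw [smul_eq_mul, abs_neg, abs_one, one_mul, show (1:ℝ)-(1-u) = u by ring]
    ring
  rw [key6]
  -- combine the two halves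
  have hsplit : (∫ u in Ioo (0:ℝ) (1/2), u^(A-1) * (1-u)^(B-1))
      + (∫ v in Ioo (1/2:ℝ) 1, v^(A-1) * (1-v)^(B-1))
      = ∫ x in Ioo (0:ℝ) 1, x^(A-1) * (1-x)^(B-1) := by
    have hdisj : Disjoint (Ioo (0:ℝ) (1/2)) (Ico (1/2:ℝ) 1) := by
      rw [Set.disjoint_left]
      rintro x ⟨_, h2⟩ ⟨h3, _⟩
      exact absurd h3 (not_le.mpr h2)
    rw [setIntegral_congr_set (Ioo_ae_eq_Ico (a := (1/2:ℝ)) (b := 1)),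
      ← setIntegral_union hdisj measurableSet_Ico
        ((betaIntegrable hA hB).mono_set (Ioo_subset_Ioo le_rfl (by norm_num)))
        ((betaIntegrable hA hB).mono_set (Ico_subset_Ioo_left (by norm_num))),
      Set.Ioo_union_Ico_eq_Ioo (by norm_num) (by norm_num)]
  rw [hsplit, betaReal hA hB]

lemma gamma_type_integrable {q b : ℝ} (hq : -1 < q) (hb : 0 < b) :
    IntegrableOn (fun u : ℝ => u^q * exp (-(b*u))) (Ioi 0) := by
  have base : IntegrableOn (fun x : ℝ => exp (-x) * x ^ (q+1-1)) (Ioi 0) :=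
    Real.GammaIntegral_convergent (by linarith)
  have h2 : IntegrableOn (fun x : ℝ => exp (-(b*x)) * (b*x) ^ (q+1-1)) (Ioi 0) := by
    have := (integrableOn_Ioi_comp_mul_left_iff (fun x => exp (-x) * x ^ (q+1-1)) 0 hb).mpr
    rw [mul_zero] at this
    exact this base
  have h3 : IntegrableOn (fun x : ℝ => b ^ (-q) * (exp (-(b*x)) * (b*x) ^ (q+1-1))) (Ioi 0) :=
    h2.const_mul (b ^ (-q))
  refine IntegrableOn.congr_fun h3 (fun x hx => ?_) measurableSet_Ioi
  have hx0 : (0:ℝ) < x := hx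
  rw [Real.mul_rpow hb.le hx0.le]
  rw [show q+1-1 = q by ring,
    show b^(-q) * (exp (-(b*x)) * (b^q * x^q)) = (b^(-q) * b^q) * (x^q * exp (-(b*x))) by ring,
    ← Real.rpow_add hb]
  norm_num

lemma gamma_type_value {q b : ℝ} (hq : -1 < q) (hb : 0 < b) :
    ∫ u in Ioi (0:ℝ), u^q * exp (-(b*u)) = b^(-(q+1)) * Real.Gamma (q+1) := by
  have := integral_rpow_mul_exp_neg_mul_rpow one_pos hq hb
  simp only [Real.rpow_one, div_one, one_mul] at this
  rw [mul_one] at this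
  rw [← this]
  refine setIntegral_congr_fun measurableSet_Ioi (fun x hx => ?_)
  rw [neg_mul]

lemma cosh_le_exp_abs (x : ℝ) : Real.cosh x ≤ Real.exp |x| := by
  rw [Real.cosh_eq]
  have h1 : Real.exp x ≤ Real.exp |x| := Real.exp_le_exp.mpr (le_abs_self x)
  have h2 : Real.exp (-x) ≤ Real.exp |x| := Real.exp_le_exp.mpr (neg_le_abs x)
  linarith

lemma coshpow_integrable {ν s : ℝ} (hνs : |ν| < s) :
    IntegrableOn (fun t : ℝ => Real.cosh (ν*t) * (Real.cosh t)^(-s)) (Ioi 0) := by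
  have hg : IntegrableOn (fun t : ℝ => (2:ℝ)^s * exp (-(s - |ν|)*t)) (Ioi 0) :=
    (exp_neg_integrableOn_Ioi 0 (by linarith)).const_mul _
  refine hg.mono' (ContinuousOn.aestronglyMeasurable (by
    apply ContinuousOn.mul (Continuous.continuousOn (by fun_prop))
    exact ContinuousOn.rpow_const (Continuous.continuousOn Real.continuous_cosh)
      (fun x _ => Or.inl (Real.cosh_pos x).ne')) measurableSet_Ioi) ?_
  rw [ae_restrict_iff' measurableSet_Ioi]
  refine ae_of_all _ (fun t ht => ?_)
  have ht0 : (0:ℝ) < t := ht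
  have hch : Real.exp t / 2 ≤ Real.cosh t := by
    rw [Real.cosh_eq]; have := (Real.exp_pos (-t)).le; linarith
  have hb1 : Real.cosh (ν*t) ≤ Real.exp (|ν| * t) := by
    calc Real.cosh (ν*t) ≤ Real.exp |ν*t| := cosh_le_exp_abs _
      _ = Real.exp (|ν| * t) := by rw [abs_mul, abs_of_pos ht0]
  have hb2 : (Real.cosh t)^(-s) ≤ (Real.exp t / 2)^(-s) :=
    Real.rpow_le_rpow_of_nonpos (by positivity) hch (by linarith [abs_nonneg ν])
  have hb3 : (Real.exp t / 2)^(-s) = (2:ℝ)^s * Real.exp (-(s*t)) := by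
    rw [Real.div_rpow (Real.exp_pos t).le (by norm_num : (0:ℝ) ≤ 2),
      Real.rpow_def_of_pos (Real.exp_pos t), Real.log_exp,
      Real.rpow_neg (by norm_num : (0:ℝ) ≤ 2), div_inv_eq_mul,
      show t * -s = -(s*t) by ring]
    ring
  have hpos1 : (0:ℝ) < Real.cosh (ν*t) := (Real.cosh_pos _)
  have hpos2 : (0:ℝ) ≤ (Real.cosh t)^(-s) := (Real.rpow_pos_of_pos (Real.cosh_pos _) _).le
  rw [norm_mul, Real.norm_eq_abs, Real.norm_eq_abs, abs_of_pos hpos1, abs_of_nonneg hpos2]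
  calc Real.cosh (ν*t) * (Real.cosh t)^(-s)
      ≤ Real.exp (|ν| * t) * ((Real.exp t / 2)^(-s)) :=
        mul_le_mul hb1 hb2 hpos2 (Real.exp_pos _).le
    _ = (2:ℝ)^s * (Real.exp (|ν| * t) * Real.exp (-(s*t))) := by rw [hb3]; ring
    _ = (2:ℝ)^s * Real.exp (-(s - |ν|)*t) := by
        rw [← Real.exp_add, show |ν| * t + -(s*t) = -(s - |ν|)*t by ring]

lemma mellinK {ν s : ℝ} (hA : 0 < (s+ν)/2) (hB : 0 < (s-ν)/2) :
    ∫ u in Ioi (0:ℝ), u^(s-1) * ∫ t in Ioi (0:ℝ), exp (-(u * Real.cosh t)) * Real.cosh (ν*t)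
      = 2^(s-2) * (Real.Gamma ((s+ν)/2) * Real.Gamma ((s-ν)/2)) := by
  have hs : 0 < s := by linarith
  have hνs : |ν| < s := abs_lt.mpr ⟨by linarith, by linarith⟩
  set G : ℝ × ℝ → ℝ :=
    fun p => p.2^(s-1) * (exp (-(p.2 * Real.cosh p.1)) * Real.cosh (ν*p.1)) with hGdef
  have hmeas : AEStronglyMeasurable G
      ((volume.restrict (Ioi (0:ℝ))).prod (volume.restrict (Ioi (0:ℝ)))) := by
    rw [Measure.prod_restrict]
    refine ContinuousOn.aestronglyMeasurable ?_ (measurableSet_Ioi.prod measurableSet_Ioi)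
    refine ContinuousOn.mul ?_ (Continuous.continuousOn (by fun_prop))
    exact ContinuousOn.rpow_const continuous_snd.continuousOn
      (fun p hp => Or.inl (ne_of_gt hp.2))
  -- inner u-integral of the (nonneg) integrand, for each t
  have hval : ∀ t : ℝ, ∫ u in Ioi (0:ℝ), u^(s-1) * (exp (-(u * Real.cosh t)) * Real.cosh (ν*t))
      = Real.cosh (ν*t) * ((Real.cosh t)^(-s) * Real.Gamma s) := by
    intro t
    have hc : 0 < Real.cosh t := Real.cosh_pos t
    have h1 : ∫ u in Ioi (0:ℝ), u^(s-1) * (exp (-(u * Real.cosh t)) * Real.cosh (ν*t))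
        = Real.cosh (ν*t) * ∫ u in Ioi (0:ℝ), u^(s-1) * exp (-(Real.cosh t * u)) := by
      rw [← integral_const_mul]
      refine setIntegral_congr_fun measurableSet_Ioi (fun u _ => ?_)
      rw [mul_comm u (Real.cosh t)]
      ring
    rw [h1, gamma_type_value (by linarith) hc, show s-1+1 = s by ring]
  have huint : ∀ t : ℝ, IntegrableOn
      (fun u : ℝ => u^(s-1) * (exp (-(u * Real.cosh t)) * Real.cosh (ν*t))) (Ioi 0) := by
    intro t
    have hc : 0 < Real.cosh t := Real.cosh_pos t
    have base := (gamma_type_integrable (q := s-1) (by linarith) hc).mul_const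
      (Real.cosh (ν*t))
    refine IntegrableOn.congr_fun base (fun u _ => ?_) measurableSet_Ioi
    rw [mul_comm (Real.cosh t) u]
    ring
  have hGint : Integrable G ((volume.restrict (Ioi (0:ℝ))).prod (volume.restrict (Ioi (0:ℝ)))) := by
    rw [integrable_prod_iff hmeas]
    constructor
    · exact ae_of_all _ (fun t => huint t)
    · have heq : ∀ t : ℝ, ∫ u in Ioi (0:ℝ), ‖G (t, u)‖
          = Real.cosh (ν*t) * ((Real.cosh t)^(-s) * Real.Gamma s) := by
        intro t
        rw [← hval t]
        refine setIntegral_congr_fun measurableSet_Ioi (fun u hu => ?_)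
        have hu0 : (0:ℝ) < u := hu
        have : (0:ℝ) < u^(s-1) * (exp (-(u * Real.cosh t)) * Real.cosh (ν*t)) := by
          have := Real.cosh_pos (ν*t)
          positivity
        rw [Real.norm_eq_abs, abs_of_pos this]
      have hint2 : Integrable (fun t : ℝ =>
          Real.cosh (ν*t) * ((Real.cosh t)^(-s) * Real.Gamma s))
          (volume.restrict (Ioi (0:ℝ))) := by
        have := (coshpow_integrable hνs).mul_const (Real.Gamma s)
        refine IntegrableOn.congr_fun this (fun t _ => ?_) measurableSet_Ioi
        ring
      exact hint2.congr (ae_of_all _ (fun t => (heq t).symm))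
  have hswap := integral_integral_swap (μ := volume.restrict (Ioi (0:ℝ)))
    (ν := volume.restrict (Ioi (0:ℝ)))
    (f := fun t u => u^(s-1) * (exp (-(u * Real.cosh t)) * Real.cosh (ν*t))) hGint
  have hLHS : ∫ u in Ioi (0:ℝ), u^(s-1) * ∫ t in Ioi (0:ℝ),
        exp (-(u * Real.cosh t)) * Real.cosh (ν*t)
      = ∫ u in Ioi (0:ℝ), ∫ t in Ioi (0:ℝ),
          u^(s-1) * (exp (-(u * Real.cosh t)) * Real.cosh (ν*t)) :=
    setIntegral_congr_fun measurableSet_Ioi (fun u _ => (integral_const_mul _ _).symm)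
  rw [hLHS, ← hswap]
  have hpt : ∫ t in Ioi (0:ℝ), (∫ u in Ioi (0:ℝ),
        u^(s-1) * (exp (-(u * Real.cosh t)) * Real.cosh (ν*t)))
      = ∫ t in Ioi (0:ℝ), Real.Gamma s * (Real.cosh (ν*t) * (Real.cosh t)^(-s)) := by
    refine setIntegral_congr_fun measurableSet_Ioi (fun t _ => ?_)
    rw [hval t]
    ring
  rw [hpt, integral_const_mul]
  have hJ := J_integral hA hB
  rw [show (s+ν)/2 - (s-ν)/2 = ν by ring, show (s+ν)/2 + (s-ν)/2 = s by ring] at hJ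
  rw [hJ]
  have hgne : Real.Gamma s ≠ 0 := (Real.Gamma_pos_of_pos hs).ne'
  field_simp

lemma mellin_besselK {ν s : ℝ} (hA : 0 < (s+ν)/2) (hB : 0 < (s-ν)/2) :
    ∫ u in Ioi (0:ℝ), u^(s-1) * besselK ν u
      = 2^(s-2) * (Real.Gamma ((s+ν)/2) * Real.Gamma ((s-ν)/2)) := by
  rw [← mellinK hA hB]
  refine setIntegral_congr_fun measurableSet_Ioi (fun u _ => ?_)
  unfold besselK
  congr 1
  refine setIntegral_congr_fun measurableSet_Ioi (fun t _ => ?_)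
  rw [neg_mul]

lemma half_subst (ν s : ℝ) :
    ∫ x in Ioi (0:ℝ), (1/2) * x^((s-2)/2) * besselK ν (Real.sqrt x)
      = ∫ u in Ioi (0:ℝ), u^(s-1) * besselK ν u := by
  rw [← integral_comp_rpow_Ioi (fun u => u^(s-1) * besselK ν u)
    (p := (1/2:ℝ)) (by norm_num)]
  refine setIntegral_congr_fun measurableSet_Ioi (fun x hx => ?_)
  have hx0 : (0:ℝ) < x := hx
  rw [smul_eq_mul, Real.sqrt_eq_rpow, ← Real.rpow_mul hx0.le,
    show |(1/2:ℝ)| = 1/2 by norm_num]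
  rw [show x ^ ((s-2)/2) = x^((1:ℝ)/2-1) * x^(1/2*(s-1)) by
    rw [← Real.rpow_add hx0]; congr 1; ring]
  ring

end MomentsAux

/-- moments of the weight function `w_{μ,ν}`. -/
theorem moments_weightW (μ ν : ℝ) (h1 : -1 < μ + ν) (hint : ∃ m : ℕ, μ - ν = m) (k : ℕ) :
    ((∃ m : ℕ, μ - ν = 2 * m) →
      ∫ x in Set.Ioi (0:ℝ), x ^ k * weightW μ ν x
        = Real.Gamma ((k : ℝ) + (μ - ν + 1)/2) * Real.Gamma ((k : ℝ) + (μ + ν + 1)/2) *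
            2 ^ (2 * (k : ℝ) + μ - 1)) ∧
    ((∃ m : ℕ, μ - ν = 2 * m + 1) →
      ∫ x in Set.Ioi (0:ℝ), x ^ k * weightW μ ν x
        = Real.Gamma ((k : ℝ) + (μ - ν + 2)/2) * Real.Gamma ((k : ℝ) + (μ + ν + 2)/2) *
            2 ^ (2 * (k : ℝ) + μ)) := by
  have hk0 : (0:ℝ) ≤ (k:ℝ) := Nat.cast_nonneg k
  constructor
  · rintro ⟨m, hm⟩
    have hm0 : (0:ℝ) ≤ (m:ℝ) := Nat.cast_nonneg m
    set s : ℝ := 2*(k:ℝ) + μ + 1 with hs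
    have hWeq : EqOn (fun x : ℝ => x ^ k * weightW μ ν x)
        (fun x : ℝ => (1/2) * x^((s-2)/2) * besselK ν (Real.sqrt x)) (Ioi 0) := by
      intro x hx
      have hx0 : (0:ℝ) < x := hx
      simp only
      rw [weightW, if_pos ⟨(m:ℤ), by exact_mod_cast hm⟩, ← Real.rpow_natCast x k,
        show (s-2)/2 = (k:ℝ) + (μ-1)/2 by rw [hs]; ring, Real.rpow_add hx0]
      ring
    rw [setIntegral_congr_fun measurableSet_Ioi hWeq, half_subst,
      mellin_besselK (by simp only [hs]; linarith) (by simp only [hs]; linarith [hm0, hm]),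
      show (s+ν)/2 = (k:ℝ) + (μ+ν+1)/2 by rw [hs]; ring,
      show (s-ν)/2 = (k:ℝ) + (μ-ν+1)/2 by rw [hs]; ring,
      show s-2 = 2*(k:ℝ) + μ - 1 by rw [hs]; ring]
    ring
  · rintro ⟨m, hm⟩
    have hm0 : (0:ℝ) ≤ (m:ℝ) := Nat.cast_nonneg m
    set s : ℝ := 2*(k:ℝ) + μ + 2 with hs
    have hodd : ¬ ∃ j : ℤ, μ - ν = 2 * j := by
      rintro ⟨j, hj⟩
      have : ((2*(m:ℤ)+1 : ℤ):ℝ) = ((2*j : ℤ):ℝ) := by push_cast; linarith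
      have h2 : (2*(m:ℤ)+1 : ℤ) = 2*j := by exact_mod_cast this
      omega
    have hWeq : EqOn (fun x : ℝ => x ^ k * weightW μ ν x)
        (fun x : ℝ => (1/2) * x^((s-2)/2) * besselK ν (Real.sqrt x)) (Ioi 0) := by
      intro x hx
      have hx0 : (0:ℝ) < x := hx
      simp only
      rw [weightW, if_neg hodd, ← Real.rpow_natCast x k,
        show (s-2)/2 = (k:ℝ) + μ/2 by rw [hs]; ring, Real.rpow_add hx0]
      ring
    rw [setIntegral_congr_fun measurableSet_Ioi hWeq, half_subst,
      mellin_besselK (by simp only [hs]; linarith) (by simp only [hs]; linarith [hm0, hm]),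
      show (s+ν)/2 = (k:ℝ) + (μ+ν+2)/2 by rw [hs]; ring,
      show (s-ν)/2 = (k:ℝ) + (μ-ν+2)/2 by rw [hs]; ring,
      show s-2 = 2*(k:ℝ) + μ by rw [hs]; ring]
    ring

end
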